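/- Let S be a finite set of points in R^2 and let B ⊆ R^2 be a bounded set. Then there exists δ > 0 such that for every point c ∈ B there exists a point c′ ∈ R^2 with the following two properties: (i) c and c′ are combinatorially equivalent with respect to S, i.e., for every affine function ℓ : R^2 → R vanishing on two distinct points of S, ℓ(c)·ℓ(c′) ≥ 0; and (ii) every line determined by S that is δ-near c passes through c′. -/

import Mathlib

open scoped RealInnerProductSpace

noncomputable abbrev EE := EuclideanSpace ℝ (Fin 2)

def Gf (p q x : EE) : ℝ := (q 0 - p 0) * (x 1 - p 1) - (q 1 - p 1) * (x 0 - p 0)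

lemma mem_pair_iff {p q x : EE} :
    x ∈ affineSpan ℝ ({p, q} : Set EE) ↔ ∃ r : ℝ, r • (q - p) = x - p := by
  conv_lhs => rw [show x = (x - p) +ᵥ p by simp]
  exact vadd_left_mem_affineSpan_pair

lemma inner_two (x y : EE) : ⟪x, y⟫ = x 0 * y 0 + x 1 * y 1 := by
  simp [PiLp.inner_apply, Fin.sum_univ_two]
  ring

lemma abs_coord_le (x : EE) (i : Fin 2) : |x i| ≤ ‖x‖ := by
  rw [EuclideanSpace.norm_eq]
  rw [show |x i| = Real.sqrt (x i ^ 2) by rw [Real.sqrt_sq_eq_abs]]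
  apply Real.sqrt_le_sqrt
  fin_cases i <;> simp [Fin.sum_univ_two] <;> nlinarith [sq_nonneg (x 0), sq_nonneg (x 1)]

lemma Gf_eq_zero_of_mem {p q x : EE} (h : x ∈ affineSpan ℝ ({p, q} : Set EE)) :
    Gf p q x = 0 := by
  obtain ⟨r, hr⟩ := mem_pair_iff.mp h
  have h0 : x 0 - p 0 = r * (q 0 - p 0) := by
    have := congrArg (fun v : EE => v 0) hr; simpa [PiLp.smul_apply, PiLp.sub_apply] using this.symm
  have h1 : x 1 - p 1 = r * (q 1 - p 1) := by
    have := congrArg (fun v : EE => v 1) hr; simpa [PiLp.smul_apply, PiLp.sub_apply] using this.symm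
  unfold Gf
  linear_combination (q 0 - p 0) * h1 - (q 1 - p 1) * h0

lemma ne_coords {p q : EE} (h : p ≠ q) : (q 0 - p 0)^2 + (q 1 - p 1)^2 ≠ 0 := by
  intro hc
  apply h
  have h0 : q 0 - p 0 = 0 := by nlinarith [sq_nonneg (q 0 - p 0), sq_nonneg (q 1 - p 1)]
  have h1 : q 1 - p 1 = 0 := by nlinarith [sq_nonneg (q 0 - p 0), sq_nonneg (q 1 - p 1)]
  ext i
  fin_cases i
  · show p 0 = q 0; linarith
  · show p 1 = q 1; linarith

lemma mem_of_Gf_eq_zero {p q x : EE} (h : p ≠ q) (hG : Gf p q x = 0) :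
    x ∈ affineSpan ℝ ({p, q} : Set EE) := by
  rw [mem_pair_iff]
  have hd := ne_coords h
  refine ⟨((q 0 - p 0) * (x 0 - p 0) + (q 1 - p 1) * (x 1 - p 1)) / ((q 0 - p 0)^2 + (q 1 - p 1)^2), ?_⟩
  unfold Gf at hG
  ext i
  fin_cases i
  · show _ * (q 0 - p 0) = x 0 - p 0
    rw [div_mul_eq_mul_div, div_eq_iff hd]
    linear_combination (q 1 - p 1) * hG
  · show _ * (q 1 - p 1) = x 1 - p 1
    rw [div_mul_eq_mul_div, div_eq_iff hd]
    linear_combination (p 0 - q 0) * hG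

lemma ell_eq {a : EE} {b : ℝ} {s₁ s₂ : EE} (hne : s₁ ≠ s₂)
    (h1 : ⟪a, s₁⟫ + b = 0) (h2 : ⟪a, s₂⟫ + b = 0) :
    ∃ l : ℝ, ∀ x : EE, ⟪a, x⟫ + b = l * Gf s₁ s₂ x := by
  have hd := ne_coords hne
  rw [inner_two] at h1 h2
  refine ⟨(a 1 * (s₂ 0 - s₁ 0) - a 0 * (s₂ 1 - s₁ 1)) / ((s₂ 0 - s₁ 0)^2 + (s₂ 1 - s₁ 1)^2), ?_⟩
  intro x
  rw [inner_two]
  rw [div_mul_eq_mul_div, eq_div_iff hd]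
  unfold Gf
  linear_combination (((s₂ 0 - s₁ 0)^2 + (s₂ 1 - s₁ 1)^2) - ((x 0 - s₁ 0) * (s₂ 0 - s₁ 0) + (x 1 - s₁ 1) * (s₂ 1 - s₁ 1))) * h1 + ((x 0 - s₁ 0) * (s₂ 0 - s₁ 0) + (x 1 - s₁ 1) * (s₂ 1 - s₁ 1)) * h2

lemma key (A0 A1 B0 B1 u0 u1 v0 v1 w0 w1 ε : ℝ) (hε0 : 0 ≤ ε) (hε1 : ε ≤ 1)
    (hu0 : |u0| ≤ ε) (hu1 : |u1| ≤ ε) (hv0 : |v0| ≤ ε) (hv1 : |v1| ≤ ε)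
    (hw0 : |w0| ≤ ε) (hw1 : |w1| ≤ ε)
    (hG : (A0 + v0 - u0) * (B1 + w1 - u1) - (A1 + v1 - u1) * (B0 + w0 - u0) = 0) :
    |A0 * B1 - A1 * B0| ≤ (2*(|A0| + |A1| + |B0| + |B1|) + 8) * ε := by
  have hwu1 : |w1 - u1| ≤ 2 * ε := (abs_sub _ _).trans (by linarith)
  have hwu0 : |w0 - u0| ≤ 2 * ε := (abs_sub _ _).trans (by linarith)
  have hvu0 : |v0 - u0| ≤ 2 * ε := (abs_sub _ _).trans (by linarith)
  have hvu1 : |v1 - u1| ≤ 2 * ε := (abs_sub _ _).trans (by linarith)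
  have hT : A0 * B1 - A1 * B0 =
      -(A0 * (w1 - u1) + (v0 - u0) * B1 + (v0 - u0) * (w1 - u1)
        - (A1 * (w0 - u0) + (v1 - u1) * B0 + (v1 - u1) * (w0 - u0))) := by
    linear_combination hG
  rw [hT, abs_neg]
  have b1 : |A0 * (w1 - u1)| ≤ |A0| * (2 * ε) := by
    rw [abs_mul]; exact mul_le_mul_of_nonneg_left hwu1 (abs_nonneg _)
  have b2 : |(v0 - u0) * B1| ≤ |B1| * (2 * ε) := by
    rw [abs_mul, mul_comm]; exact mul_le_mul_of_nonneg_left hvu0 (abs_nonneg _)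
  have b3 : |(v0 - u0) * (w1 - u1)| ≤ 2 * (2 * ε) := by
    rw [abs_mul]
    exact mul_le_mul (hvu0.trans (by linarith)) hwu1 (abs_nonneg _) (by norm_num)
  have b4 : |A1 * (w0 - u0)| ≤ |A1| * (2 * ε) := by
    rw [abs_mul]; exact mul_le_mul_of_nonneg_left hwu0 (abs_nonneg _)
  have b5 : |(v1 - u1) * B0| ≤ |B0| * (2 * ε) := by
    rw [abs_mul, mul_comm]; exact mul_le_mul_of_nonneg_left hvu1 (abs_nonneg _)
  have b6 : |(v1 - u1) * (w0 - u0)| ≤ 2 * (2 * ε) := by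
    rw [abs_mul]
    exact mul_le_mul (hvu1.trans (by linarith)) hwu0 (abs_nonneg _) (by norm_num)
  calc |A0 * (w1 - u1) + (v0 - u0) * B1 + (v0 - u0) * (w1 - u1)
        - (A1 * (w0 - u0) + (v1 - u1) * B0 + (v1 - u1) * (w0 - u0))|
      ≤ |A0 * (w1 - u1) + (v0 - u0) * B1 + (v0 - u0) * (w1 - u1)|
        + |A1 * (w0 - u0) + (v1 - u1) * B0 + (v1 - u1) * (w0 - u0)| := abs_sub _ _
    _ ≤ (|A0 * (w1 - u1)| + |(v0 - u0) * B1| + |(v0 - u0) * (w1 - u1)|)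
        + (|A1 * (w0 - u0)| + |(v1 - u1) * B0| + |(v1 - u1) * (w0 - u0)|) := by
        gcongr <;> exact (abs_add_le _ _).trans (by gcongr; exact abs_add_le _ _)
    _ ≤ (2*(|A0| + |A1| + |B0| + |B1|) + 8) * ε := by linarith

open Filter Topology in
/-- For a finite set `S` of sites in the plane and a bounded region `B`,
there is a `δ > 0` such that every point `c ∈ B` has a combinatorially
equivalent point `c'` lying on every line determined by two sites that is
`δ`-near `c`. -/
theorem point_unsharpening_in_plane
    (S : Finset (EuclideanSpace ℝ (Fin 2)))
    (B : Set (EuclideanSpace ℝ (Fin 2))) (hB : Bornology.IsBounded B) :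
    ∃ δ : ℝ, 0 < δ ∧
      ∀ c ∈ B, ∃ c' : EuclideanSpace ℝ (Fin 2),
        (∀ (a : EuclideanSpace ℝ (Fin 2)) (b : ℝ) (s₁ s₂ : EuclideanSpace ℝ (Fin 2)),
          s₁ ∈ S → s₂ ∈ S → s₁ ≠ s₂ →
          ⟪a, s₁⟫ + b = 0 → ⟪a, s₂⟫ + b = 0 →
          0 ≤ (⟪a, c⟫ + b) * (⟪a, c'⟫ + b)) ∧
        (∀ s₁ s₂ : EuclideanSpace ℝ (Fin 2), s₁ ∈ S → s₂ ∈ S → s₁ ≠ s₂ →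
          ∀ p q : EuclideanSpace ℝ (Fin 2), p ≠ q →
            ‖p - s₁‖ ≤ δ → ‖q - s₂‖ ≤ δ →
            c ∈ affineSpan ℝ ({p, q} : Set (EuclideanSpace ℝ (Fin 2))) →
            c' ∈ affineSpan ℝ ({s₁, s₂} : Set (EuclideanSpace ℝ (Fin 2)))) := by
  by_contra hcon
  push_neg at hcon
  choose c hcB hc using fun n : ℕ => hcon (1 / ((n : ℝ) + 1)) (by positivity)
  obtain ⟨x, -, φ, hφ, hlim⟩ :=
    hB.isCompact_closure.tendsto_subseq (fun n => subset_closure (hcB n))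
  -- coordinate projections are continuous
  have hproj : ∀ i : Fin 2, Continuous fun y : EE => y i := fun i =>
    (EuclideanSpace.proj (i : Fin 2) (𝕜 := ℝ)).continuous
  have HA : ∀ᶠ n in atTop, ∀ s₁ ∈ S, ∀ s₂ ∈ S,
      s₁ ≠ s₂ → 0 ≤ Gf s₁ s₂ (c (φ n)) * Gf s₁ s₂ x := by
    rw [eventually_all_finset]
    intro s₁ hs₁
    rw [eventually_all_finset]
    intro s₂ hs₂
    by_cases hne : s₁ = s₂
    · exact Eventually.of_forall fun n h => absurd hne h
    by_cases hx : Gf s₁ s₂ x = 0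
    · exact Eventually.of_forall fun n _ => by rw [hx, mul_zero]
    have hcont : Continuous fun y : EE => Gf s₁ s₂ y := by
      unfold Gf
      exact (continuous_const.mul ((hproj 1).sub continuous_const)).sub
        (continuous_const.mul ((hproj 0).sub continuous_const))
    have T : Tendsto (fun n => Gf s₁ s₂ (c (φ n)) * Gf s₁ s₂ x) atTop
        (𝓝 (Gf s₁ s₂ x * Gf s₁ s₂ x)) :=
      (((hcont.tendsto x).comp hlim).mul tendsto_const_nhds)
    have hpos : 0 < Gf s₁ s₂ x * Gf s₁ s₂ x := mul_self_pos.mpr hx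
    exact ((tendsto_order.mp T).1 0 hpos).mono fun n h _ => le_of_lt h
  have HC : ∀ᶠ n in atTop, ∀ s₁ ∈ S, ∀ s₂ ∈ S, s₁ ≠ s₂ →
      ∀ p q : EE, p ≠ q → ‖p - s₁‖ ≤ 1 / ((φ n : ℝ) + 1) → ‖q - s₂‖ ≤ 1 / ((φ n : ℝ) + 1) →
        c (φ n) ∈ affineSpan ℝ ({p, q} : Set EE) →
        x ∈ affineSpan ℝ ({s₁, s₂} : Set EE) := by
    rw [eventually_all_finset]
    intro s₁ hs₁
    rw [eventually_all_finset]
    intro s₂ hs₂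
    by_cases hne : s₁ ≠ s₂
    swap
    · exact Eventually.of_forall fun n h => absurd h hne
    by_cases hmem : x ∈ affineSpan ℝ ({s₁, s₂} : Set EE)
    · exact Eventually.of_forall fun n _ _ _ _ _ _ _ => hmem
    have hGx : Gf s₁ s₂ x ≠ 0 := fun h => hmem (mem_of_Gf_eq_zero hne h)
    have hGxpos : 0 < |Gf s₁ s₂ x| := abs_pos.mpr hGx
    obtain ⟨C, hC⟩ : ∃ C : ℝ, C = 2 * (|s₂ 0 - s₁ 0| + |s₂ 1 - s₁ 1| + |x 0 - s₁ 0| + |x 1 - s₁ 1|) + 8 := ⟨_, rfl⟩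
    have hCpos : 0 < C := by rw [hC]; positivity
    obtain ⟨ε, hεdef⟩ : ∃ ε : ℝ, ε = min 1 (|Gf s₁ s₂ x| / (2 * C)) := ⟨_, rfl⟩
    have hε : 0 < ε := hεdef ▸ lt_min one_pos (by positivity)
    have ev1 : ∀ᶠ n in atTop, 1 / ((φ n : ℝ) + 1) ≤ ε := by
      have hT : Tendsto (fun n : ℕ => 1 / ((φ n : ℝ) + 1)) atTop (𝓝 0) :=
        tendsto_one_div_add_atTop_nhds_zero_nat.comp hφ.tendsto_atTop
      exact hT.eventually (eventually_le_nhds hε)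
    have ev2 : ∀ᶠ n in atTop, ‖c (φ n) - x‖ ≤ ε := by
      have := hlim.eventually (Metric.closedBall_mem_nhds x hε)
      exact this.mono fun n h => by
        simpa [mem_closedBall_iff_norm, dist_eq_norm] using h
    filter_upwards [ev1, ev2] with n h1 h2
    intro _ p q hpq hp hq hmemc
    exfalso
    have hδε : ∀ y z : EE, ‖y - z‖ ≤ 1 / ((φ n : ℝ) + 1) → ∀ i, |y i - z i| ≤ ε := by
      intro y z hy i
      have := (abs_coord_le (y - z) i).trans (hy.trans h1)
      simpa [PiLp.sub_apply] using this
    have hw : ∀ i, |c (φ n) i - x i| ≤ ε := by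
      intro i
      have := (abs_coord_le (c (φ n) - x) i).trans h2
      simpa [PiLp.sub_apply] using this
    have hG0 : Gf p q (c (φ n)) = 0 := Gf_eq_zero_of_mem hmemc
    have hkey := key (s₂ 0 - s₁ 0) (s₂ 1 - s₁ 1) (x 0 - s₁ 0) (x 1 - s₁ 1)
      (p 0 - s₁ 0) (p 1 - s₁ 1) (q 0 - s₂ 0) (q 1 - s₂ 1)
      (c (φ n) 0 - x 0) (c (φ n) 1 - x 1) ε hε.le (hεdef ▸ min_le_left _ _)
      (hδε p s₁ hp 0) (hδε p s₁ hp 1) (hδε q s₂ hq 0) (hδε q s₂ hq 1)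
      (hw 0) (hw 1)
      (by unfold Gf at hG0; linear_combination hG0)
    have hGfx : Gf s₁ s₂ x = (s₂ 0 - s₁ 0) * (x 1 - s₁ 1) - (s₂ 1 - s₁ 1) * (x 0 - s₁ 0) := rfl
    rw [← hGfx, ← hC] at hkey
    have hεle : ε ≤ |Gf s₁ s₂ x| / (2 * C) := hεdef ▸ min_le_right _ _
    have : C * ε ≤ |Gf s₁ s₂ x| / 2 := by
      calc C * ε ≤ C * (|Gf s₁ s₂ x| / (2 * C)) := by
            exact mul_le_mul_of_nonneg_left hεle hCpos.le
        _ = |Gf s₁ s₂ x| / 2 := by field_simp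
    linarith
  obtain ⟨n, hAn, hCn⟩ := (HA.and HC).exists
  obtain ⟨s₁, s₂, hs₁, hs₂, hne, p, q, hpq, hp, hq, hcmem, hnotmem⟩ :=
    hc (φ n) x (fun a b s₁ s₂ hs₁ hs₂ hne h1 h2 => by
      obtain ⟨l, hl⟩ := ell_eq hne h1 h2
      rw [hl, hl]
      have := hAn s₁ hs₁ s₂ hs₂ hne
      nlinarith [sq_nonneg l])
  exact hnotmem (hCn s₁ hs₁ s₂ hs₂ hne p q hpq hp hq hcmem)
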